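/- arXiv:math-ph/0606016 — 4 statements merged into one kernel-verified Lean document; each statement's English description precedes it below -/
import Mathlib

section
/- Let F : ℝ^m → ℝ^l be continuously differentiable and suppose the system F(x) = 0 has maximal rank, i.e., the derivative DF(x) : ℝ^m → ℝ^l is surjective at every point x of the zero set Z = {x : F(x) = 0}. Let w : ℝ^m → ℝ^m be a continuously differentiable vector field with global flow ψ. Then the flow maps the zero set into itself (for all ε ∈ ℝ and all x with F(x) = 0, F(ψ(ε, x)) = 0) if and only if DF(x)(w(x)) = 0 for every x with F(x) = 0. -/
open Set Filter Topology

/-- Local key lemma: if `F` is C¹ with surjective derivative at a zero `a`, the C¹ field `w`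
satisfies `DF(x)(w(x)) = 0` on the zero set, then the flow through `a` stays in the zero set
for small times. -/
lemma flow_local_zero
    {m l : ℕ} {F : (Fin m → ℝ) → (Fin l → ℝ)} (hF : ContDiff ℝ 1 F)
    {w : (Fin m → ℝ) → (Fin m → ℝ)} (hw : ContDiff ℝ 1 w)
    (hcond : ∀ x, F x = 0 → fderiv ℝ F x (w x) = 0)
    {ψ : ℝ → (Fin m → ℝ) → (Fin m → ℝ)}
    (hψ0 : ∀ x, ψ 0 x = x)
    (hψflow : ∀ x t, HasDerivAt (fun s => ψ s x) (w (ψ t x)) t)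
    {a : Fin m → ℝ} (ha : F a = 0)
    (hsurj : Function.Surjective (fderiv ℝ F a)) :
    ∀ᶠ t in 𝓝 (0:ℝ), F (ψ t a) = 0 := by
  classical
  obtain ⟨q, hq⟩ := Submodule.exists_isCompl (fderiv ℝ F a).ker
  set K := (fderiv ℝ F a).ker with hKdef
  set π : (Fin m → ℝ) →L[ℝ] K :=
    LinearMap.toContinuousLinearMap (K.projectionOnto q hq) with hπdef
  have hπ : ∀ v : K, π v = v := fun v => by
    simp [hπdef, LinearMap.coe_toContinuousLinearMap',
      Submodule.projectionOnto_apply_left hq]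
  have hrange : LinearMap.range ((fderiv ℝ F a : (Fin m → ℝ) →ₗ[ℝ] (Fin l → ℝ))) = ⊤ := LinearMap.range_eq_top.mpr hsurj
  have hπrange : LinearMap.range ((π : (Fin m → ℝ) →ₗ[ℝ] K)) = ⊤ := LinearMap.range_eq_top.mpr fun z => ⟨z, hπ z⟩
  have hπker : LinearMap.ker ((π : (Fin m → ℝ) →ₗ[ℝ] K)) = q := by
    ext v
    simp [hπdef, LinearMap.mem_ker, LinearMap.coe_toContinuousLinearMap',
      Submodule.projectionOnto_apply_eq_zero_iff hq]
  have hcompl : IsCompl (fderiv ℝ F a).ker π.ker := by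
    rw [hπker]; exact hq
  set Φ' := ContinuousLinearMap.equivProdOfSurjectiveOfIsCompl (fderiv ℝ F a) π
    hrange hπrange hcompl with hΦ'def
  set Φ : (Fin m → ℝ) → (Fin l → ℝ) × K := fun x => (F x, π x) with hΦdef
  have hΦc : ContDiffAt ℝ 1 Φ a := (hF.contDiffAt).prodMk (π.contDiff.contDiffAt)
  have hΦd : HasFDerivAt Φ (Φ' : (Fin m → ℝ) →L[ℝ] (Fin l → ℝ) × K) a := by
    have h1 : HasFDerivAt Φ ((fderiv ℝ F a).prod π) a :=
      ((hF.differentiable one_ne_zero a).hasFDerivAt).prodMk π.hasFDerivAt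
    have heq : (Φ' : (Fin m → ℝ) →L[ℝ] (Fin l → ℝ) × K) = (fderiv ℝ F a).prod π :=
      ContinuousLinearMap.ext fun x => rfl
    rw [heq]; exact h1
  set Ψ := hΦc.localInverse hΦd one_ne_zero with hΨdef
  have hS : HasStrictFDerivAt Φ (Φ' : (Fin m → ℝ) →L[ℝ] (Fin l → ℝ) × K) a :=
    hΦc.hasStrictFDerivAt' hΦd one_ne_zero
  have hΨΦ : ∀ᶠ x in 𝓝 a, Ψ (Φ x) = x := hS.eventually_left_inverse
  have hΨΦa : Ψ (Φ a) = a := hΦc.localInverse_apply_image hΦd one_ne_zero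
  have hΦΨ : ∀ᶠ y in 𝓝 (Φ a), Φ (Ψ y) = y := hS.eventually_right_inverse
  have hΨc : ContDiffAt ℝ 1 Ψ (Φ a) := hΦc.to_localInverse hΦd one_ne_zero
  have hΨev : ∀ᶠ y in 𝓝 (Φ a), ContDiffAt ℝ 1 Ψ y := hΨc.eventually (by simp)
  have hΦa : Φ a = ((0 : Fin l → ℝ), π a) := by simp [hΦdef, ha]
  -- the projected vector field
  set v : K → K := fun z => π (w (Ψ ((0 : Fin l → ℝ), z))) with hvdef
  have hv : ContDiffAt ℝ 1 v (π a) := by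
    have h1 : ContDiffAt ℝ 1 (fun z : K => ((0 : Fin l → ℝ), z)) (π a) :=
      (contDiff_const.prodMk contDiff_id).contDiffAt
    have h2 : ContDiffAt ℝ 1 Ψ ((0 : Fin l → ℝ), π a) := hΦa ▸ hΨc
    have h3 : ContDiffAt ℝ 1 w (Ψ ((0 : Fin l → ℝ), π a)) := hw.contDiffAt
    exact (π.contDiff.contDiffAt).comp (π a)
      ((hw.contDiffAt).comp (π a) (h2.comp (π a) h1))
  obtain ⟨u, hu0, ε₁, hε₁pos, hu⟩ := hv.exists_forall_mem_closedBall_exists_eq_forall_mem_Ioo_hasDerivAt₀ (0 : ℝ)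
  rw [zero_sub, zero_add] at hu
  -- Lipschitz neighborhood of `a` for `w`
  obtain ⟨Kw, tset, htset, hlip⟩ := hw.contDiffAt.exists_lipschitzOnWith (x := a)
  -- open sets where left/right inverse identities hold
  obtain ⟨sL, hsLsub, hsLopen, hasL⟩ := mem_nhds_iff.mp hΨΦ
  obtain ⟨sR, hsRsub, hsRopen, hΦaR⟩ := mem_nhds_iff.mp (hΦΨ.and hΨev)
  set c : ℝ → (Fin m → ℝ) := fun t => Ψ ((0 : Fin l → ℝ), u t) with hcdef
  have hc0 : c 0 = a := by rw [hcdef]; simp only; rw [hu0, ← hΦa, hΨΦa]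
  -- continuity facts at 0
  have hucont : ContinuousAt u 0 := (hu 0 (by constructor <;> simp [hε₁pos])).continuousAt
  have hpaircont : ContinuousAt (fun t : ℝ => ((0 : Fin l → ℝ), u t)) 0 :=
    (continuousAt_const.prodMk hucont)
  have hpair0 : ((0 : Fin l → ℝ), u 0) = Φ a := by rw [hu0, hΦa]
  have hccont : ContinuousAt c 0 := by
    have h1 : ContinuousAt Ψ ((0 : Fin l → ℝ), u 0) := by
      rw [hpair0]; exact hΨc.continuousAt
    exact ContinuousAt.comp (g := Ψ) (f := fun t : ℝ => ((0 : Fin l → ℝ), u t)) h1 hpaircont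
  -- collect eventual facts
  have hP1 : ∀ᶠ t in 𝓝 (0:ℝ), ((0 : Fin l → ℝ), u t) ∈ sR := by
    have : sR ∈ 𝓝 (((0 : Fin l → ℝ), u 0)) := by
      rw [hpair0]; exact hsRopen.mem_nhds hΦaR
    exact hpaircont this
  have hP2 : ∀ᶠ t in 𝓝 (0:ℝ), c t ∈ sL := by
    have : sL ∈ 𝓝 (c 0) := by rw [hc0]; exact hsLopen.mem_nhds hasL
    exact hccont this
  have hP3 : ∀ᶠ t in 𝓝 (0:ℝ), c t ∈ tset := by
    have : tset ∈ 𝓝 (c 0) := by rw [hc0]; exact htset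
    exact hccont this
  have hψacont : ContinuousAt (fun t : ℝ => ψ t a) 0 := (hψflow a 0).continuousAt
  have hP4 : ∀ᶠ t in 𝓝 (0:ℝ), ψ t a ∈ tset := by
    have : tset ∈ 𝓝 (ψ 0 a) := by rw [hψ0]; exact htset
    exact hψacont this
  have hP5 : ∀ᶠ t in 𝓝 (0:ℝ), t ∈ Ioo (-ε₁) ε₁ :=
    Ioo_mem_nhds (by linarith) hε₁pos
  obtain ⟨δ, hδpos, hδ⟩ := Metric.eventually_nhds_iff.mp
    ((((hP1.and hP2).and hP3).and hP4).and hP5)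
  have hδ' : ∀ t ∈ Ioo (-δ) δ,
      ((((0 : Fin l → ℝ), u t) ∈ sR ∧ c t ∈ sL) ∧ c t ∈ tset) ∧ ψ t a ∈ tset ∧
        t ∈ Ioo (-ε₁) ε₁ := by
    intro t ht
    have : dist t 0 < δ := by
      rw [Real.dist_eq, sub_zero, abs_lt]; exact ⟨ht.1, ht.2⟩
    have h := hδ this
    exact ⟨⟨⟨h.1.1.1.1, h.1.1.1.2⟩, h.1.1.2⟩, h.1.2, h.2⟩
  -- key facts on Ioo (-δ) δ
  have hΦct : ∀ t ∈ Ioo (-δ) δ, Φ (c t) = ((0 : Fin l → ℝ), u t) := by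
    intro t ht
    exact (hsRsub (hδ' t ht).1.1.1).1
  have hFct : ∀ t ∈ Ioo (-δ) δ, F (c t) = 0 := by
    intro t ht
    have := congrArg Prod.fst (hΦct t ht)
    simpa [hΦdef] using this
  have hderiv : ∀ t ∈ Ioo (-δ) δ, HasDerivAt c (w (c t)) t := by
    intro t ht
    have hΨat : ContDiffAt ℝ 1 Ψ ((0 : Fin l → ℝ), u t) := (hsRsub (hδ' t ht).1.1.1).2
    have hcurve : HasDerivAt (fun s : ℝ => ((0 : Fin l → ℝ), u s))
        (((0 : Fin l → ℝ), v (u t)) : (Fin l → ℝ) × K) t :=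
      (hasDerivAt_const t (0 : Fin l → ℝ)).prodMk (hu t (hδ' t ht).2.2)
    have hc1 : HasDerivAt c (fderiv ℝ Ψ ((0 : Fin l → ℝ), u t) ((0 : Fin l → ℝ), v (u t))) t :=
      ((hΨat.differentiableAt one_ne_zero).hasFDerivAt).comp_hasDerivAt t hcurve
    have hΦdt : HasFDerivAt Φ ((fderiv ℝ F (c t)).prod π) (c t) :=
      ((hF.differentiable one_ne_zero (c t)).hasFDerivAt).prodMk π.hasFDerivAt
    have hΨdt : HasFDerivAt Ψ (fderiv ℝ Ψ ((0 : Fin l → ℝ), u t)) (Φ (c t)) := by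
      rw [hΦct t ht]
      exact (hΨat.differentiableAt one_ne_zero).hasFDerivAt
    have hcomp : HasFDerivAt (fun x => Ψ (Φ x))
        ((fderiv ℝ Ψ ((0 : Fin l → ℝ), u t)).comp ((fderiv ℝ F (c t)).prod π)) (c t) :=
      hΨdt.comp _ hΦdt
    have hev : (fun x => Ψ (Φ x)) =ᶠ[𝓝 (c t)] id := by
      filter_upwards [hsLopen.mem_nhds (hδ' t ht).1.1.2] with x hx using hsLsub hx
    have hid : (fderiv ℝ Ψ ((0 : Fin l → ℝ), u t)).comp ((fderiv ℝ F (c t)).prod π) =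
        ContinuousLinearMap.id ℝ (Fin m → ℝ) :=
      (hcomp.congr_of_eventuallyEq hev.symm).unique (hasFDerivAt_id _)
    have h1 : ((fderiv ℝ F (c t)).prod π) (w (c t)) = ((0 : Fin l → ℝ), v (u t)) := by
      have hz := hcond (c t) (hFct t ht)
      simp only [hcdef] at hz
      simp [ContinuousLinearMap.prod_apply, hz, hvdef, hcdef]
    have hkey : fderiv ℝ Ψ ((0 : Fin l → ℝ), u t) ((0 : Fin l → ℝ), v (u t)) = w (c t) := by
      calc fderiv ℝ Ψ ((0 : Fin l → ℝ), u t) ((0 : Fin l → ℝ), v (u t))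
          = ((fderiv ℝ Ψ ((0 : Fin l → ℝ), u t)).comp ((fderiv ℝ F (c t)).prod π)) (w (c t)) := by
            rw [ContinuousLinearMap.comp_apply, h1]
        _ = w (c t) := by rw [hid]; rfl
    exact hkey ▸ hc1
  -- uniqueness of ODE solutions
  have h0mem : (0:ℝ) ∈ Ioo (-δ) δ := ⟨by linarith, hδpos⟩
  have heq : EqOn c (fun t => ψ t a) (Ioo (-δ) δ) :=
    ODE_solution_unique_of_mem_Ioo (v := fun _ y => w y) (s := fun _ => tset)
      (fun _ _ => hlip) h0mem
      (fun t ht => ⟨hderiv t ht, (hδ' t ht).1.2⟩)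
      (fun t ht => ⟨hψflow a t, (hδ' t ht).2.1⟩)
      (by rw [hc0, hψ0])
  filter_upwards [Ioo_mem_nhds (show -δ < 0 by linarith) hδpos] with t ht
  have h3 : c t = ψ t a := heq ht
  rw [← h3]
  exact hFct t ht

/-- For a C¹ map `F` of maximal rank on its zero set and a C¹ vector
field `w` with global flow `ψ`, the flow preserves the zero set of `F` iff
`DF(x)(w(x)) = 0` on the zero set. -/
theorem symmetry_group_of_algebraic_system
    {m l : ℕ} (F : (Fin m → ℝ) → (Fin l → ℝ)) (hF : ContDiff ℝ 1 F)
    (hrank : ∀ x : Fin m → ℝ, F x = 0 → Function.Surjective (fderiv ℝ F x))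
    (w : (Fin m → ℝ) → (Fin m → ℝ)) (hw : ContDiff ℝ 1 w)
    (ψ : ℝ → (Fin m → ℝ) → (Fin m → ℝ))
    (hψ0 : ∀ x, ψ 0 x = x)
    (hψadd : ∀ s t x, ψ (s + t) x = ψ s (ψ t x))
    (hψflow : ∀ x t, HasDerivAt (fun s => ψ s x) (w (ψ t x)) t) :
    (∀ (ε : ℝ) (x : Fin m → ℝ), F x = 0 → F (ψ ε x) = 0) ↔
      ∀ x : Fin m → ℝ, F x = 0 → fderiv ℝ F x (w x) = 0 := by
  constructor
  · intro H x hx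
    have hconst : (fun s : ℝ => F (ψ s x)) = fun _ => (0 : Fin l → ℝ) :=
      funext fun s => H s x hx
    have hd : HasDerivAt (fun s : ℝ => ψ s x) (w x) 0 := by
      have := hψflow x 0
      rwa [hψ0] at this
    have hFd : HasFDerivAt F (fderiv ℝ F x) (ψ 0 x) := by
      rw [hψ0]; exact (hF.differentiable one_ne_zero x).hasFDerivAt
    have hcompd : HasDerivAt (fun s : ℝ => F (ψ s x)) (fderiv ℝ F x (w x)) 0 :=
      hFd.comp_hasDerivAt 0 hd
    have hzero : HasDerivAt (fun s : ℝ => F (ψ s x)) 0 0 := by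
      rw [hconst]; exact hasDerivAt_const _ _
    exact hcompd.unique hzero
  · intro hcond ε x hx
    set S : Set ℝ := {t | F (ψ t x) = 0} with hSdef
    have hψcont : Continuous fun t => ψ t x :=
      continuous_iff_continuousAt.mpr fun t => (hψflow x t).continuousAt
    have hclosed : IsClosed S := by
      have : S = (fun t => F (ψ t x)) ⁻¹' {0} := by
        ext t; simp [hSdef]
      rw [this]
      exact IsClosed.preimage (hF.continuous.comp hψcont) isClosed_singleton
    have hopen : IsOpen S := by
      rw [isOpen_iff_mem_nhds]
      intro t0 ht0
      have ha : F (ψ t0 x) = 0 := ht0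
      have hloc : ∀ᶠ s in 𝓝 (0:ℝ), F (ψ s (ψ t0 x)) = 0 :=
        flow_local_zero hF hw hcond hψ0 hψflow ha (hrank _ ha)
      have htend : Filter.Tendsto (fun t : ℝ => t - t0) (𝓝 t0) (𝓝 (0:ℝ)) := by
        have h := ((continuous_id (X := ℝ)).sub (continuous_const (y := t0))).tendsto t0
        simpa [Pi.sub_def] using h
      have := htend.eventually hloc
      filter_upwards [this] with t ht
      have : F (ψ ((t - t0) + t0) x) = 0 := by rw [hψadd]; exact ht
      simpa [hSdef, sub_add_cancel] using this
    have h0S : (0:ℝ) ∈ S := by simp [hSdef, hψ0, hx]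
    rcases isClopen_iff.mp ⟨hclosed, hopen⟩ with h | h
    · exact absurd (h ▸ h0S) (notMem_empty 0)
    · have : ε ∈ S := h ▸ mem_univ ε
      exact this
end

section
/- Let v, w : ℝ^m → ℝ^m be continuously differentiable vector fields whose Lie bracket vanishes identically, [v, w](x) = 0 for all x. Let ψ be a global flow of w such that ψ(ε, ·) is continuously differentiable in the space variable for each ε. Then the flow of w preserves the vector field v: for all ε ∈ ℝ and x ∈ ℝ^m, D_x ψ(ε, x)(v(x)) = v(ψ(ε, x)), where D_x ψ(ε, x) is the derivative of the map y ↦ ψ(ε, y) at x. -/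
open Set Metric Real

set_option maxHeartbeats 2000000 in
private lemma commuting_flow_key
    {m : ℕ} (v w : (Fin m → ℝ) → (Fin m → ℝ))
    (hv : ContDiff ℝ 1 v) (hw : ContDiff ℝ 1 w)
    (hbracket : ∀ x : Fin m → ℝ, fderiv ℝ w x (v x) - fderiv ℝ v x (w x) = 0)
    (ψ : ℝ → (Fin m → ℝ) → (Fin m → ℝ))
    (hψ0 : ∀ x, ψ 0 x = x)
    (hψflow : ∀ x t, HasDerivAt (fun s => ψ s x) (w (ψ t x)) t)
    (hψsmooth : ∀ ε : ℝ, ContDiff ℝ 1 (ψ ε)) :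
    ∀ (ε : ℝ), 0 ≤ ε → ∀ (x : Fin m → ℝ),
      fderiv ℝ (ψ ε) x (v x) = v (ψ ε x) := by
  intro ε hε x₀
  -- curves are continuous in time
  have hcurve : ∀ y, Continuous (fun t => ψ t y) := fun y =>
    continuous_iff_continuousAt.mpr fun t => (hψflow y t).continuousAt
  set c : ℝ → (Fin m → ℝ) := fun t => ψ t x₀ with hcdef
  have hccont : Continuous c := hcurve x₀
  -- a big ball containing the trajectory with margin 2
  obtain ⟨R₀, hR₀⟩ := (isCompact_Icc : IsCompact (Icc (0:ℝ) ε)).exists_bound_of_continuousOn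
    (show ContinuousOn (fun t => c t - x₀) (Icc (0:ℝ) ε) from (hccont.sub continuous_const).continuousOn (s := Icc (0:ℝ) ε))
  set R : ℝ := max R₀ 0 + 2 with hRdef
  set B : Set (Fin m → ℝ) := closedBall x₀ R with hBdef
  have hcB : ∀ t ∈ Icc 0 ε, c t ∈ B := by
    intro t ht
    rw [hBdef, mem_closedBall_iff_norm]
    have := hR₀ t ht
    have h1 : R₀ ≤ max R₀ 0 := le_max_left _ _
    linarith
  have hBcompact : IsCompact B := isCompact_closedBall _ _
  have hBconv : Convex ℝ B := convex_closedBall _ _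
  -- bound on the derivative of w on B
  have hDwcont : Continuous (fderiv ℝ w) := hw.continuous_fderiv one_ne_zero
  obtain ⟨C₀, hC₀⟩ := hBcompact.exists_bound_of_continuousOn hDwcont.continuousOn
  set C : ℝ := max C₀ 1 with hCdef
  have hC1 : (1:ℝ) ≤ C := le_max_right _ _
  have hCpos : (0:ℝ) < C := lt_of_lt_of_le one_pos hC1
  have hCb : ∀ z ∈ B, ‖fderiv ℝ w z‖ ≤ C := fun z hz =>
    (hC₀ z hz).trans (le_max_left _ _)
  have hwd : ∀ z, HasFDerivAt w (fderiv ℝ w z) z := fun z =>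
    (hw.differentiable one_ne_zero z).hasFDerivAt
  -- mean value inequality on B
  have mvtB : ∀ a ∈ B, ∀ b ∈ B, ‖w b - w a‖ ≤ C * ‖b - a‖ := fun a ha b hb =>
    hBconv.norm_image_sub_le_of_norm_hasFDerivWithin_le
      (fun z hz => (hwd z).hasFDerivWithinAt) hCb ha hb
  -- Grönwall estimate, assuming trajectories stay in B
  have gron : ∀ (y : Fin m → ℝ) (b : ℝ), b ≤ ε → (∀ u ∈ Icc (0:ℝ) b, ψ u y ∈ B) →
      ∀ t ∈ Icc (0:ℝ) b, ‖ψ t y - c t‖ ≤ ‖y - x₀‖ * exp (C * t) := by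
    intro y b hbε hmem t ht
    have hcont : ContinuousOn (fun t => ψ t y - c t) (Icc 0 b) :=
      ((hcurve y).sub hccont).continuousOn
    have key := norm_le_gronwallBound_of_norm_deriv_right_le
      (f := fun t => ψ t y - c t) (f' := fun t => w (ψ t y) - w (c t))
      (δ := ‖y - x₀‖) (K := C) (ε := 0) (a := 0) (b := b)
      hcont
      (fun u hu => (((hψflow y u).sub (hψflow x₀ u)).hasDerivWithinAt))
      (by simp [hcdef, hψ0])
      (fun u hu => by
        have hu' : u ∈ Icc (0:ℝ) b := Ico_subset_Icc_self hu
        have h1 := mvtB (c u) (hcB u ⟨hu'.1, hu'.2.trans hbε⟩) (ψ u y) (hmem u hu')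
        simpa using h1)
      t ht
    rwa [gronwallBound_ε0, sub_zero] at key
  -- confinement: trajectories starting close to x₀ stay in B on [0, ε]
  have confine : ∀ y : Fin m → ℝ, ‖y - x₀‖ * exp (C * ε) ≤ 1/2 →
      ∀ t ∈ Icc (0:ℝ) ε, ψ t y ∈ B := by
    intro y hy
    have hexp1 : (1:ℝ) ≤ exp (C * ε) := by
      rw [← exp_zero]
      exact exp_le_exp.mpr (mul_nonneg hCpos.le hε)
    have hynorm : ‖y - x₀‖ ≤ 1/2 := by
      nlinarith [norm_nonneg (y - x₀)]
    set S : Set ℝ := {t | ∀ u ∈ Icc (0:ℝ) t, ‖ψ u y - c u‖ ≤ 1} with hSdef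
    have hgc : Continuous (fun t => ‖ψ t y - c t‖) := ((hcurve y).sub hccont).norm
    have htube : ∀ t, ‖ψ t y - c t‖ ≤ 1 → t ∈ Icc (0:ℝ) ε → ψ t y ∈ B := by
      intro t h1 ht
      rw [hBdef, mem_closedBall_iff_norm]
      have h2 := hR₀ t ht
      have h3 : ‖ψ t y - x₀‖ ≤ ‖ψ t y - c t‖ + ‖c t - x₀‖ := norm_sub_le_norm_sub_add_norm_sub _ _ _
      have h4 : R₀ ≤ max R₀ 0 := le_max_left _ _
      rw [hRdef]
      linarith
    have hScl : IsClosed (S ∩ Icc 0 ε) := by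
      apply IsSeqClosed.isClosed
      intro u p hu hup
      have hp : p ∈ Icc (0:ℝ) ε := isClosed_Icc.isSeqClosed (fun n => (hu n).2) hup
      refine ⟨?_, hp⟩
      intro q hq
      rcases eq_or_lt_of_le hq.2 with hqp | hqp
      · -- q = p : use min (u n) p → p
        have hmin : Filter.Tendsto (fun n => min (u n) p) Filter.atTop (nhds p) := by
          simpa [min_self] using hup.min (tendsto_const_nhds (x := p))
        have hval : ∀ n, ‖ψ (min (u n) p) y - c (min (u n) p)‖ ≤ 1 := fun n =>
          (hu n).1 (min (u n) p) ⟨le_min (hu n).2.1 hp.1, min_le_left _ _⟩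
        have := le_of_tendsto ((hgc.continuousAt.tendsto).comp hmin)
          (Filter.Eventually.of_forall hval)
        rwa [hqp]
      · -- q < p : eventually u n > q
        have : ∀ᶠ n in Filter.atTop, u n ∈ Ioi q :=
          hup.eventually_mem (Ioi_mem_nhds hqp)
        obtain ⟨n, hn⟩ := this.exists
        exact (hu n).1 q ⟨hq.1, le_of_lt hn⟩
    have hsub : Icc (0:ℝ) ε ⊆ S := by
      apply hScl.Icc_subset_of_forall_exists_gt
      · intro u hu
        have : u = 0 := le_antisymm hu.2 hu.1
        subst this
        simp only [hcdef, hψ0]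
        linarith
      · intro x hx z hz
        -- Grönwall bound up to x gives norm ≤ 1/2 at x
        have hxI : x ∈ Icc (0:ℝ) ε := ⟨hx.2.1, hx.2.2.le⟩
        have hmemx : ∀ u ∈ Icc (0:ℝ) x, ψ u y ∈ B := fun u hu =>
          htube u (hx.1 u hu) ⟨hu.1, hu.2.trans hxI.2⟩
        have hgx := gron y x hxI.2 hmemx x ⟨hxI.1, le_rfl⟩
        have hgx2 : ‖ψ x y - c x‖ ≤ 1/2 := by
          have he : exp (C * x) ≤ exp (C * ε) :=
            exp_le_exp.mpr (mul_le_mul_of_nonneg_left hxI.2 hCpos.le)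
          calc ‖ψ x y - c x‖ ≤ ‖y - x₀‖ * exp (C * x) := hgx
            _ ≤ ‖y - x₀‖ * exp (C * ε) :=
                mul_le_mul_of_nonneg_left he (norm_nonneg _)
            _ ≤ 1/2 := hy
        -- extend a bit past x using continuity
        have hopen : IsOpen {t : ℝ | ‖ψ t y - c t‖ < 1} := isOpen_lt hgc continuous_const
        have hxin : x ∈ {t : ℝ | ‖ψ t y - c t‖ < 1} := by
          simp only [mem_setOf_eq]; linarith
        obtain ⟨δ, hδ, hball⟩ := Metric.isOpen_iff.mp hopen x hxin
        refine ⟨min z (x + δ/2), ?_, lt_min hz (by linarith), min_le_left _ _⟩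
        · intro u hu
          rcases le_or_gt u x with h | h
          · exact hx.1 u ⟨hu.1, h⟩
          · have hu2 : u ≤ x + δ/2 := hu.2.trans (min_le_right _ _)
            have : u ∈ ball x δ := by
              rw [mem_ball, Real.dist_eq, abs_lt]
              constructor <;> linarith
            exact (hball this).le
    intro t ht
    exact htube t ((hsub ht) t ⟨ht.1, le_rfl⟩) ht
  -- uniform continuity modulus of Dw on B, Taylor error bound
  have hucont := hBcompact.uniformContinuousOn_of_continuous hDwcont.continuousOn
  have taylor : ∀ ρ : ℝ, 0 < ρ → ∃ δ : ℝ, 0 < δ ∧ ∀ a ∈ B, ∀ b ∈ B, ‖b - a‖ < δ →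
      ‖w b - w a - fderiv ℝ w a (b - a)‖ ≤ ρ * ‖b - a‖ := by
    intro ρ hρ
    obtain ⟨δ, hδ, hmod⟩ := Metric.uniformContinuousOn_iff.mp hucont ρ hρ
    refine ⟨δ, hδ, fun a ha b hb hab => ?_⟩
    have hseg : segment ℝ a b ⊆ B := hBconv.segment_subset ha hb
    have hmvt := (convex_segment a b).norm_image_sub_le_of_norm_hasFDerivWithin_le
      (f := fun z => w z - fderiv ℝ w a z)
      (f' := fun z => fderiv ℝ w z - fderiv ℝ w a) (C := ρ)
      (fun z hz => ((hwd z).sub ((fderiv ℝ w a).hasFDerivAt)).hasFDerivWithinAt)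
      (fun z hz => by
        have hzB : z ∈ B := hseg hz
        have hdist : dist a z < δ := by
          have h1 := dist_add_dist_of_mem_segment hz
          have h2 : (0:ℝ) ≤ dist z b := dist_nonneg
          calc dist a z ≤ dist a b := by linarith
            _ = ‖b - a‖ := by rw [dist_eq_norm, norm_sub_rev]
            _ < δ := hab
        have := hmod a ha z hzB hdist
        rw [dist_eq_norm, norm_sub_rev] at this
        exact this.le)
      (left_mem_segment ℝ a b) (right_mem_segment ℝ a b)
    have heq : (w b - fderiv ℝ w a b) - (w a - fderiv ℝ w a a)
        = w b - w a - fderiv ℝ w a (b - a) := by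
      rw [map_sub]; abel
    rwa [heq] at hmvt
  -- the transported field along the curve satisfies the linear ODE
  set g : ℝ → (Fin m → ℝ) := fun t => v (c t) with hgdef
  have hg' : ∀ t, HasDerivAt g (fderiv ℝ w (c t) (g t)) t := by
    intro t
    have h1 : HasDerivAt g (fderiv ℝ v (c t) (w (c t))) t :=
      ((hv.differentiable one_ne_zero (c t)).hasFDerivAt).comp_hasDerivAt t (hψflow x₀ t)
    have hE : fderiv ℝ w (c t) (v (c t)) = fderiv ℝ v (c t) (w (c t)) :=
      sub_eq_zero.mp (hbracket (c t))
    rw [← hE] at h1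
    exact h1
  have hgcont : Continuous g := (hv.continuous).comp hccont
  set u₀ : Fin m → ℝ := v x₀ with hu₀def
  set A := fderiv ℝ (ψ ε) x₀ with hAdef
  -- main estimate
  have main : ∀ θ : ℝ, 0 < θ → ‖A u₀ - g ε‖ ≤ θ := by
    intro θ hθ
    set V : ℝ := ‖u₀‖ + 1 with hVdef
    have hV : 0 < V := by positivity
    have hu₀V : ‖u₀‖ ≤ V := by simp [hVdef]
    have hexppos : (0:ℝ) < exp (C * ε) := exp_pos _
    have hexp1 : (1:ℝ) ≤ exp (C * ε) := by
      rw [← exp_zero]; exact exp_le_exp.mpr (mul_nonneg hCpos.le hε)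
    set M : ℝ := exp (C * ε) * exp (C * ε) * V with hMdef
    have hM : 0 < M := by positivity
    set ρ : ℝ := θ / (2 * M) with hρdef
    have hρ : 0 < ρ := by positivity
    obtain ⟨δ₁, hδ₁, htay⟩ := taylor ρ hρ
    have hA : HasFDerivAt (ψ ε) A x₀ := ((hψsmooth ε).differentiable one_ne_zero x₀).hasFDerivAt
    have hlo := hA.isLittleO
    have hev := Asymptotics.isLittleO_iff.mp hlo (c := θ / (2 * V)) (by positivity)
    obtain ⟨δ₂, hδ₂, hA2⟩ := Metric.eventually_nhds_iff.mp hev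
    -- choose s
    set s : ℝ := min (min ((1/2) * exp (-(C * ε)) / V) (δ₁ / (2 * exp (C * ε) * V)))
      (δ₂ / (2 * V)) with hsdef
    have hs : 0 < s := by
      apply lt_min (lt_min _ _) <;> positivity
    set y : Fin m → ℝ := x₀ + s • u₀ with hydef
    have hyx : y - x₀ = s • u₀ := by rw [hydef]; abel
    have hynorm : ‖y - x₀‖ = s * ‖u₀‖ := by
      rw [hyx, norm_smul, Real.norm_of_nonneg hs.le]
    have hyV : ‖y - x₀‖ ≤ s * V := by
      rw [hynorm]; exact mul_le_mul_of_nonneg_left hu₀V hs.le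
    -- the three smallness conditions
    have hs1 : s * V * exp (C * ε) ≤ 1/2 := by
      have h1 : s ≤ (1/2) * exp (-(C * ε)) / V := (min_le_left _ _).trans (min_le_left _ _)
      have h2 : s * V ≤ (1/2) * exp (-(C * ε)) := by
        rw [le_div_iff₀ hV] at h1
        linarith
      calc s * V * exp (C * ε) ≤ (1/2) * exp (-(C * ε)) * exp (C * ε) :=
            mul_le_mul_of_nonneg_right h2 hexppos.le
        _ = 1/2 := by rw [mul_assoc, ← exp_add]; simp
    have hs2 : s * V * exp (C * ε) ≤ δ₁ / 2 := by
      have h1 : s ≤ δ₁ / (2 * exp (C * ε) * V) := (min_le_left _ _).trans (min_le_right _ _)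
      rw [le_div_iff₀ (by positivity)] at h1
      nlinarith
    have hs3 : s * V < δ₂ := by
      have h1 : s ≤ δ₂ / (2 * V) := min_le_right _ _
      rw [le_div_iff₀ (by positivity)] at h1
      nlinarith
    have hconf : ‖y - x₀‖ * exp (C * ε) ≤ 1/2 :=
      le_trans (mul_le_mul_of_nonneg_right hyV hexppos.le) hs1
    have hmemB : ∀ t ∈ Icc (0:ℝ) ε, ψ t y ∈ B := confine y hconf
    have hclose : ∀ t ∈ Icc (0:ℝ) ε, ‖ψ t y - c t‖ ≤ ‖y - x₀‖ * exp (C * t) :=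
      gron y ε le_rfl hmemB
    set η : ℝ := ρ * (s * V * exp (C * ε)) with hηdef
    set Rf : ℝ → (Fin m → ℝ) := fun t => ψ t y - c t - s • g t with hRfdef
    have hR0 : Rf 0 = 0 := by
      have h0 : Rf 0 = ψ 0 y - ψ 0 x₀ - s • v (ψ 0 x₀) := rfl
      rw [h0, hψ0, hψ0, hyx, ← hu₀def]
      abel
    have hR' : ∀ t, HasDerivAt Rf (w (ψ t y) - w (c t) - s • (fderiv ℝ w (c t) (g t))) t :=
      fun t => (((hψflow y t).sub (hψflow x₀ t)).sub ((hg' t).const_smul s))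
    have hbound : ∀ t ∈ Ico (0:ℝ) ε,
        ‖w (ψ t y) - w (c t) - s • (fderiv ℝ w (c t) (g t))‖ ≤ C * ‖Rf t‖ + η := by
      intro t ht
      have htI : t ∈ Icc (0:ℝ) ε := Ico_subset_Icc_self ht
      have haB : c t ∈ B := hcB t htI
      have hbB : ψ t y ∈ B := hmemB t htI
      have hba : ‖ψ t y - c t‖ ≤ s * V * exp (C * ε) := by
        have h1 := hclose t htI
        have h2 : exp (C * t) ≤ exp (C * ε) :=
          exp_le_exp.mpr (mul_le_mul_of_nonneg_left htI.2 hCpos.le)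
        calc ‖ψ t y - c t‖ ≤ ‖y - x₀‖ * exp (C * t) := h1
          _ ≤ (s * V) * exp (C * ε) :=
              mul_le_mul hyV h2 (exp_pos _).le (by positivity)
          _ = s * V * exp (C * ε) := by ring
      have hbalt : ‖ψ t y - c t‖ < δ₁ := lt_of_le_of_lt (hba.trans hs2) (by linarith)
      have htaylor := htay (c t) haB (ψ t y) hbB hbalt
      have hdecomp : w (ψ t y) - w (c t) - s • (fderiv ℝ w (c t) (g t))
          = fderiv ℝ w (c t) (Rf t)
            + (w (ψ t y) - w (c t) - fderiv ℝ w (c t) (ψ t y - c t)) := by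
        have hsplit : fderiv ℝ w (c t) (Rf t)
            = fderiv ℝ w (c t) (ψ t y - c t) - s • fderiv ℝ w (c t) (g t) := by
          have hR : Rf t = (ψ t y - c t) - s • g t := rfl
          rw [hR, map_sub, map_smul]
        rw [hsplit]; abel
      rw [hdecomp]
      have h1 : ‖fderiv ℝ w (c t) (Rf t)‖ ≤ C * ‖Rf t‖ :=
        le_trans (ContinuousLinearMap.le_opNorm _ _)
          (mul_le_mul_of_nonneg_right (hCb _ haB) (norm_nonneg _))
      have h2 : ‖w (ψ t y) - w (c t) - fderiv ℝ w (c t) (ψ t y - c t)‖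
          ≤ ρ * (s * V * exp (C * ε)) :=
        le_trans htaylor (mul_le_mul_of_nonneg_left hba hρ.le)
      exact le_trans (norm_add_le _ _) (add_le_add h1 h2)
    have hRcont : ContinuousOn Rf (Icc 0 ε) :=
      (((hcurve y).sub hccont).sub ((continuous_const : Continuous fun _ : ℝ => s).smul hgcont)).continuousOn
    have hgron := norm_le_gronwallBound_of_norm_deriv_right_le
      (f := Rf) (f' := fun t => w (ψ t y) - w (c t) - s • (fderiv ℝ w (c t) (g t)))
      (δ := 0) (K := C) (ε := η) (a := 0) (b := ε)
      hRcont (fun t ht => (hR' t).hasDerivWithinAt)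
      (by rw [hR0]; simp) hbound ε ⟨hε, le_rfl⟩
    have hηnn : (0:ℝ) ≤ η := by positivity
    have hRε : ‖Rf ε‖ ≤ η * exp (C * ε) := by
      have h1 : gronwallBound 0 C η (ε - 0) = η / C * (exp (C * ε) - 1) := by
        rw [gronwallBound_of_K_ne_0 hCpos.ne']
        rw [sub_zero]
        ring
      rw [h1] at hgron
      have h2 : η / C ≤ η := by
        rw [div_le_iff₀ hCpos]
        nlinarith
      have h3 : exp (C * ε) - 1 ≤ exp (C * ε) := by linarith
      calc ‖Rf ε‖ ≤ η / C * (exp (C * ε) - 1) := hgron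
        _ ≤ η * exp (C * ε) := mul_le_mul h2 h3 (by linarith) hηnn
    have hydist : dist y x₀ < δ₂ := by
      rw [dist_eq_norm]
      exact lt_of_le_of_lt hyV hs3
    have hA3 := hA2 hydist
    have hA4 : ‖ψ ε y - ψ ε x₀ - A (y - x₀)‖ ≤ θ / 2 * s := by
      calc ‖ψ ε y - ψ ε x₀ - A (y - x₀)‖ ≤ θ / (2 * V) * ‖y - x₀‖ := hA3
        _ ≤ θ / (2 * V) * (s * V) :=
            mul_le_mul_of_nonneg_left hyV (by positivity)
        _ = θ / 2 * s := by field_simp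
    have hR5 : ‖Rf ε‖ ≤ θ / 2 * s := by
      have heq : η * exp (C * ε) = θ / 2 * s := by
        rw [hηdef, hρdef, hMdef]
        field_simp
      rw [← heq]; exact hRε
    have hdec : s • (A u₀ - g ε) = (A (y - x₀) - (ψ ε y - ψ ε x₀)) + Rf ε := by
      have h1 : A (y - x₀) = s • A u₀ := by rw [hyx, map_smul]
      have h2 : Rf ε = ψ ε y - ψ ε x₀ - s • g ε := rfl
      rw [h1, h2, smul_sub]; abel
    have h6 : ‖s • (A u₀ - g ε)‖ ≤ θ * s := by
      rw [hdec]
      calc ‖(A (y - x₀) - (ψ ε y - ψ ε x₀)) + Rf ε‖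
          ≤ ‖A (y - x₀) - (ψ ε y - ψ ε x₀)‖ + ‖Rf ε‖ := norm_add_le _ _
        _ ≤ θ / 2 * s + θ / 2 * s := by
            refine add_le_add ?_ hR5
            rw [norm_sub_rev]
            exact hA4
        _ = θ * s := by ring
    rw [norm_smul, Real.norm_of_nonneg hs.le] at h6
    have h7 : s * ‖A u₀ - g ε‖ ≤ s * θ := by linarith
    exact le_of_mul_le_mul_left h7 hs
  -- conclude
  have hle : ‖A u₀ - g ε‖ ≤ 0 := by
    by_contra h
    push_neg at h
    have := main (‖A u₀ - g ε‖ / 2) (by linarith)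
    linarith
  have hzero : A u₀ - g ε = 0 := norm_le_zero_iff.mp hle
  exact sub_eq_zero.mp hzero

/-- If `[v, w] = 0` then the flow of `w` preserves the vector field `v`:
`D_x ψ(ε, x)(v(x)) = v(ψ(ε, x))`. -/
theorem commuting_flow_preserves_field
    {m : ℕ} (v w : (Fin m → ℝ) → (Fin m → ℝ))
    (hv : ContDiff ℝ 1 v) (hw : ContDiff ℝ 1 w)
    (hbracket : ∀ x : Fin m → ℝ, fderiv ℝ w x (v x) - fderiv ℝ v x (w x) = 0)
    (ψ : ℝ → (Fin m → ℝ) → (Fin m → ℝ))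
    (hψ0 : ∀ x, ψ 0 x = x)
    (hψadd : ∀ s t x, ψ (s + t) x = ψ s (ψ t x))
    (hψflow : ∀ x t, HasDerivAt (fun s => ψ s x) (w (ψ t x)) t)
    (hψsmooth : ∀ ε : ℝ, ContDiff ℝ 1 (ψ ε)) :
    ∀ (ε : ℝ) (x : Fin m → ℝ), fderiv ℝ (ψ ε) x (v x) = v (ψ ε x) := by
  intro ε x
  rcases le_total 0 ε with hε | hε
  · exact commuting_flow_key v w hv hw hbracket ψ hψ0 hψflow hψsmooth ε hε x
  · have hwneg : ContDiff ℝ 1 (fun y => -w y) := hw.neg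
    have hbneg : ∀ z : Fin m → ℝ,
        fderiv ℝ (fun y => -w y) z (v z) - fderiv ℝ v z ((fun y => -w y) z) = 0 := by
      intro z
      have h1 : fderiv ℝ (fun y => -w y) z = -fderiv ℝ w z :=
        fderiv_fun_neg
      have hb := sub_eq_zero.mp (hbracket z)
      rw [h1]
      simp only [ContinuousLinearMap.neg_apply, map_neg]
      rw [hb]
      abel
    have h := commuting_flow_key v (fun y => -w y) hv hwneg hbneg
      (fun t x => ψ (-t) x)
      (fun x => by simp [hψ0])
      (fun x t => by
        have h1 := (hψflow x (-t)).scomp t (hasDerivAt_neg t)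
        simpa [Function.comp_def] using h1)
      (fun e => hψsmooth (-e))
      (-ε) (neg_nonneg.mpr hε) x
    simpa using h
end

section
/- Let v, w : ℝ^m → ℝ^m be continuously differentiable vector fields with vanishing Lie bracket, [v, w](x) = 0 for all x, and let ψ be a global flow of w such that ψ(ε, ·) is continuously differentiable in the space variable for each ε. Then the flow of w is a symmetry group of the autonomous ordinary differential equation ẋ = v(x): for every ε ∈ ℝ and every differentiable solution γ : ℝ → ℝ^m of γ'(t) = v(γ(t)), the transformed curve t ↦ ψ(ε, γ(t)) is again a solution of the same equation. -/
open Metric Set Filter Real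
open scoped Topology NNReal

variable {E : Type*} [NormedAddCommGroup E] [NormedSpace ℝ E]
variable {w : E → E} {ψ : ℝ → E → E}

lemma flow_speed (hψ0 : ∀ x, ψ 0 x = x)
    (hψflow : ∀ x t, HasDerivAt (fun s => ψ s x) (w (ψ t x)) t)
    (p : E) {C : ℝ} (hC : ∀ x ∈ closedBall p 3, ‖w x‖ ≤ C)
    {q : E} (hq : q ∈ closedBall p 1) :
    ∀ s ∈ Icc (0:ℝ) (min 1 (1/(C+1))), dist (ψ s q) q ≤ (C+1) * s := by
  have hC0 : 0 ≤ C := (norm_nonneg _).trans (hC p (by simp))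
  have hC1 : (0:ℝ) < C + 1 := by linarith
  set δ₀ : ℝ := min 1 (1/(C+1)) with hδ₀def
  have hδ₀1 : δ₀ ≤ 1 := min_le_left _ _
  have hδ₀C : (C+1) * δ₀ ≤ 1 := by
    calc (C+1) * δ₀ ≤ (C+1) * (1/(C+1)) := by
          apply mul_le_mul_of_nonneg_left (min_le_right _ _) hC1.le
      _ = 1 := by field_simp
  have hcont : Continuous fun s => ψ s q :=
    continuous_iff_continuousAt.2 fun s => (hψflow q s).continuousAt
  set S : Set ℝ := {s | dist (ψ s q) q ≤ (C+1) * s} with hSdef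
  suffices h : Icc (0:ℝ) δ₀ ⊆ S by intro s hs; exact h hs
  apply IsClosed.Icc_subset_of_forall_mem_nhdsWithin
  · apply IsClosed.inter _ isClosed_Icc
    exact isClosed_le (hcont.dist continuous_const) (continuous_const.mul continuous_id)
  · simp [hSdef, hψ0 q]
  · rintro x ⟨hxS, hx0, hxδ⟩
    have hmem : ψ x q ∈ closedBall p 3 := by
      rw [mem_closedBall]
      calc dist (ψ x q) p ≤ dist (ψ x q) q + dist q p := dist_triangle _ _ _
        _ ≤ (C+1) * x + 1 := add_le_add hxS (mem_closedBall.1 hq)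
        _ ≤ 1 + 1 := by
            have : (C+1) * x ≤ (C+1) * δ₀ :=
              mul_le_mul_of_nonneg_left hxδ.le hC1.le
            linarith
        _ ≤ 3 := by norm_num
    have hd := hψflow q x
    rw [hasDerivAt_iff_isLittleO] at hd
    have hev := (Asymptotics.isLittleO_iff.1 hd) (c := 1) one_pos
    have hev' : ∀ᶠ s in 𝓝[>] x, s ∈ S := by
      filter_upwards [nhdsWithin_le_nhds hev, self_mem_nhdsWithin] with s hs hs'
      have hsx : x < s := hs'
      have h1 : ‖ψ s q - ψ x q‖ ≤ (C+1) * (s - x) := by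
        have h2 : ‖ψ s q - ψ x q - (s - x) • w (ψ x q)‖ ≤ 1 * ‖s - x‖ := hs
        have h3 : ‖(s - x) • w (ψ x q)‖ ≤ (s - x) * C := by
          rw [norm_smul, Real.norm_eq_abs, abs_of_pos (by linarith)]
          exact mul_le_mul_of_nonneg_left (hC _ hmem) (by linarith)
        have hsplit : ψ s q - ψ x q
            = (ψ s q - ψ x q - (s - x) • w (ψ x q)) + (s - x) • w (ψ x q) := by abel
        calc ‖ψ s q - ψ x q‖
            ≤ ‖ψ s q - ψ x q - (s - x) • w (ψ x q)‖ + ‖(s - x) • w (ψ x q)‖ := by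
              conv_lhs => rw [hsplit]
              exact norm_add_le _ _
          _ ≤ 1 * ‖s - x‖ + (s - x) * C := add_le_add h2 h3
          _ = (C+1) * (s - x) := by
              rw [Real.norm_eq_abs, abs_of_pos (by linarith)]; ring
      show dist (ψ s q) q ≤ (C+1) * s
      calc dist (ψ s q) q ≤ dist (ψ s q) (ψ x q) + dist (ψ x q) q := dist_triangle _ _ _
        _ ≤ (C+1) * (s - x) + (C+1) * x := by
            rw [dist_eq_norm]; exact add_le_add h1 hxS
        _ = (C+1) * s := by ring
    exact hev'

lemma flow_mem2 (hψ0 : ∀ x, ψ 0 x = x)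
    (hψflow : ∀ x t, HasDerivAt (fun s => ψ s x) (w (ψ t x)) t)
    (p : E) {C : ℝ} (hC : ∀ x ∈ closedBall p 3, ‖w x‖ ≤ C)
    {q : E} (hq : q ∈ closedBall p 1) :
    ∀ s ∈ Icc (0:ℝ) (min 1 (1/(C+1))), ψ s q ∈ closedBall p 2 := by
  intro s hs
  have hC0 : 0 ≤ C := (norm_nonneg _).trans (hC p (by simp))
  have hC1 : (0:ℝ) < C + 1 := by linarith
  have h1 := flow_speed hψ0 hψflow p hC hq s hs
  have h2 : (C+1) * s ≤ 1 := by
    calc (C+1) * s ≤ (C+1) * (1/(C+1)) :=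
          mul_le_mul_of_nonneg_left (hs.2.trans (min_le_right _ _)) hC1.le
      _ = 1 := by field_simp
  rw [mem_closedBall]
  calc dist (ψ s q) p ≤ dist (ψ s q) q + dist q p := dist_triangle _ _ _
    _ ≤ 1 + 1 := add_le_add (h1.trans h2) (mem_closedBall.1 hq)
    _ = 2 := by norm_num

lemma flow_contract (hw : ContDiff ℝ 1 w) (hψ0 : ∀ x, ψ 0 x = x)
    (hψflow : ∀ x t, HasDerivAt (fun s => ψ s x) (w (ψ t x)) t)
    (p : E) {C M : ℝ} (hC : ∀ x ∈ closedBall p 3, ‖w x‖ ≤ C)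
    (hM : ∀ x ∈ closedBall p 3, ‖fderiv ℝ w x‖ ≤ M)
    {q₁ q₂ : E} (h₁ : q₁ ∈ closedBall p 1) (h₂ : q₂ ∈ closedBall p 1) :
    ∀ s ∈ Icc (0:ℝ) (min 1 (1/(C+1))), ‖ψ s q₁ - ψ s q₂‖ ≤ ‖q₁ - q₂‖ * exp (M * s) := by
  set δ₀ : ℝ := min 1 (1/(C+1)) with hδ₀def
  have hsub : closedBall p 2 ⊆ closedBall p 3 := closedBall_subset_closedBall (by norm_num)
  have key := norm_le_gronwallBound_of_norm_deriv_right_le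
    (f := fun t => ψ t q₁ - ψ t q₂) (f' := fun t => w (ψ t q₁) - w (ψ t q₂))
    (δ := ‖q₁ - q₂‖) (K := M) (ε := 0) (a := 0) (b := δ₀)
    (by
      apply Continuous.continuousOn
      exact (continuous_iff_continuousAt.2 fun s => (hψflow q₁ s).continuousAt).sub
        (continuous_iff_continuousAt.2 fun s => (hψflow q₂ s).continuousAt))
    (fun t _ => ((hψflow q₁ t).sub (hψflow q₂ t)).hasDerivWithinAt)
    (by simp [hψ0])
    (fun t ht => by
      have m₁ := flow_mem2 hψ0 hψflow p hC h₁ t ⟨ht.1, ht.2.le⟩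
      have m₂ := flow_mem2 hψ0 hψflow p hC h₂ t ⟨ht.1, ht.2.le⟩
      have := Convex.norm_image_sub_le_of_norm_fderiv_le (f := w)
        (fun x hx => (hw.differentiable one_ne_zero).differentiableAt)
        (fun x hx => hM x (hsub hx)) (convex_closedBall p 2) m₂ m₁
      simpa using this)
  intro s hs
  have := key s hs
  rwa [gronwallBound_ε0, sub_zero] at this

lemma flow_H (hw : ContDiff ℝ 1 w) (hψ0 : ∀ x, ψ 0 x = x)
    (hψflow : ∀ x t, HasDerivAt (fun s => ψ s x) (w (ψ t x)) t)
    (p : E) {C M : ℝ} (hC : ∀ x ∈ closedBall p 3, ‖w x‖ ≤ C)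
    (hM : ∀ x ∈ closedBall p 3, ‖fderiv ℝ w x‖ ≤ M)
    {q₁ q₂ : E} (h₁ : q₁ ∈ closedBall p 1) (h₂ : q₂ ∈ closedBall p 1) :
    ∀ s ∈ Icc (0:ℝ) (min 1 (1/(C+1))),
      ‖ψ s q₁ - ψ s q₂ - (q₁ - q₂)‖ ≤ M * exp M * ‖q₁ - q₂‖ * s := by
  set δ₀ : ℝ := min 1 (1/(C+1)) with hδ₀def
  have hM0 : 0 ≤ M := (norm_nonneg _).trans (hM p (by simp))
  have hsub : closedBall p 2 ⊆ closedBall p 3 := closedBall_subset_closedBall (by norm_num)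
  intro s hs
  have hIcc : Icc (0:ℝ) δ₀ ⊆ Icc (0:ℝ) δ₀ := subset_rfl
  have key := Convex.norm_image_sub_le_of_norm_hasDerivWithin_le
    (f := fun t => ψ t q₁ - ψ t q₂) (f' := fun t => w (ψ t q₁) - w (ψ t q₂))
    (C := M * exp M * ‖q₁ - q₂‖) (s := Icc (0:ℝ) δ₀)
    (fun t ht => ((hψflow q₁ t).sub (hψflow q₂ t)).hasDerivWithinAt)
    (fun t ht => by
      have m₁ := flow_mem2 hψ0 hψflow p hC h₁ t ht
      have m₂ := flow_mem2 hψ0 hψflow p hC h₂ t ht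
      have hlip : ‖w (ψ t q₁) - w (ψ t q₂)‖ ≤ M * ‖ψ t q₁ - ψ t q₂‖ := by
        have := Convex.norm_image_sub_le_of_norm_fderiv_le (f := w)
          (fun x hx => (hw.differentiable one_ne_zero).differentiableAt)
          (fun x hx => hM x (hsub hx)) (convex_closedBall p 2) m₂ m₁
        simpa using this
      have hcon := flow_contract hw hψ0 hψflow p hC hM h₁ h₂ t ht
      have hexp : exp (M * t) ≤ exp M := by
        apply exp_le_exp.2
        calc M * t ≤ M * 1 := mul_le_mul_of_nonneg_left (ht.2.trans (min_le_left _ _)) hM0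
          _ = M := mul_one M
      calc ‖w (ψ t q₁) - w (ψ t q₂)‖ ≤ M * ‖ψ t q₁ - ψ t q₂‖ := hlip
        _ ≤ M * (‖q₁ - q₂‖ * exp (M * t)) := mul_le_mul_of_nonneg_left hcon hM0
        _ ≤ M * (‖q₁ - q₂‖ * exp M) := by
            apply mul_le_mul_of_nonneg_left _ hM0
            exact mul_le_mul_of_nonneg_left hexp (norm_nonneg _)
        _ = M * exp M * ‖q₁ - q₂‖ := by ring)
    (convex_Icc _ _) (left_mem_Icc.2 (le_trans hs.1 hs.2)) hs
  simp only [hψ0] at key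
  calc ‖ψ s q₁ - ψ s q₂ - (q₁ - q₂)‖ ≤ M * exp M * ‖q₁ - q₂‖ * ‖s - 0‖ := key
    _ = M * exp M * ‖q₁ - q₂‖ * s := by
        rw [sub_zero, Real.norm_eq_abs, abs_of_nonneg hs.1]

lemma flow_EST [ProperSpace E] (hw : ContDiff ℝ 1 w) (hψ0 : ∀ x, ψ 0 x = x)
    (hψflow : ∀ x t, HasDerivAt (fun s => ψ s x) (w (ψ t x)) t)
    (p : E) {ε' : ℝ} (hε' : 0 < ε') :
    ∃ δ₁ > (0:ℝ), ∃ η > (0:ℝ), ∀ δ ∈ Icc (0:ℝ) δ₁, ∀ q₁ ∈ closedBall p 1,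
      ∀ q₂ ∈ closedBall p 1, ‖q₁ - q₂‖ ≤ η →
      ‖ψ δ q₁ - ψ δ q₂ - (q₁ - q₂) - δ • (w q₁ - w q₂)‖ ≤ ε' * (δ * ‖q₁ - q₂‖) := by
  obtain ⟨C, hC⟩ := (isCompact_closedBall p 3).exists_bound_of_continuousOn
    hw.continuous.continuousOn
  obtain ⟨M, hM⟩ := (isCompact_closedBall p 3).exists_bound_of_continuousOn
    (hw.continuous_fderiv one_ne_zero).continuousOn
  have hC0 : 0 ≤ C := (norm_nonneg _).trans (hC p (by simp))
  have hM0 : 0 ≤ M := (norm_nonneg _).trans (hM p (by simp))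
  have hC1 : (0:ℝ) < C + 1 := by linarith
  have hexp1 : (1:ℝ) ≤ exp M := by
    rw [← exp_zero]; exact exp_le_exp.2 hM0
  have hexpM0 : (0:ℝ) < exp M := exp_pos M
  set ε₁ : ℝ := ε' / (2 * (exp M + 2)) with hε₁def
  have hε₁ : 0 < ε₁ := by
    apply div_pos hε'; positivity
  -- uniform continuity of the derivative on the big ball
  have hUCC := (isCompact_closedBall p 3).uniformContinuousOn_of_continuous
    (hw.continuous_fderiv one_ne_zero).continuousOn
  rw [Metric.uniformContinuousOn_iff] at hUCC
  obtain ⟨ρ', hρ', hUC0⟩ := hUCC ε₁ hε₁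
  set ρ : ℝ := min (ρ'/2) 1 with hρdef
  have hρ : 0 < ρ := lt_min (by linarith) one_pos
  have hρ1 : ρ ≤ 1 := min_le_right _ _
  have hUC : ∀ a ∈ closedBall p 3, ∀ b ∈ closedBall p 3, dist a b ≤ ρ →
      ‖fderiv ℝ w a - fderiv ℝ w b‖ ≤ ε₁ := by
    intro a ha b hb hab
    have : dist a b < ρ' := lt_of_le_of_lt (hab.trans (min_le_left _ _)) (by linarith)
    have := hUC0 a ha b hb this
    rw [dist_eq_norm] at this
    exact this.le
  have hsub2 : closedBall p 2 ⊆ closedBall p 3 := closedBall_subset_closedBall (by norm_num)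
  -- Taylor estimate for w on the middle ball
  have hT : ∀ x ∈ closedBall p 2, ∀ y ∈ closedBall p 2, ‖x - y‖ ≤ ρ →
      ‖w x - w y - (fderiv ℝ w y) (x - y)‖ ≤ ε₁ * ‖x - y‖ := by
    intro x hx y hy hxy
    exact Convex.norm_image_sub_le_of_norm_fderiv_le' (f := w) (φ := fderiv ℝ w y)
      (s := closedBall p 2 ∩ closedBall y ρ)
      (fun z hz => (hw.differentiable one_ne_zero).differentiableAt)
      (fun z hz => hUC z (hsub2 hz.1) y (hsub2 hy) (mem_closedBall.1 hz.2))
      ((convex_closedBall p 2).inter (convex_closedBall y ρ))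
      ⟨hy, mem_closedBall_self hρ.le⟩
      ⟨hx, by rw [mem_closedBall, dist_eq_norm]; exact hxy⟩
  set δ₀ : ℝ := min 1 (1/(C+1)) with hδ₀def
  have hδ₀ : 0 < δ₀ := lt_min one_pos (by positivity)
  set δ₁ : ℝ := min δ₀ (min (ρ/(C+1)) (ε' / (2 * (M * (M * exp M) + 1)))) with hδ₁def
  have hδ₁pos : 0 < δ₁ := by
    apply lt_min hδ₀
    apply lt_min (by positivity)
    apply div_pos hε'; positivity
  refine ⟨δ₁, hδ₁pos, ρ / exp M, by positivity, ?_⟩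
  intro δ hδ q₁ h₁ q₂ h₂ hd
  have hδIcc : δ ∈ Icc (0:ℝ) δ₀ := ⟨hδ.1, hδ.2.trans (min_le_left _ _)⟩
  have hδδ₁ : δ ≤ δ₁ := hδ.2
  have hdρ : ‖q₁ - q₂‖ ≤ ρ := hd.trans (div_le_self hρ.le hexp1)
  set CG : ℝ := ε₁ * (exp M + 2) * ‖q₁ - q₂‖ + M * (M * exp M) * δ₁ * ‖q₁ - q₂‖ with hCGdef
  have key := Convex.norm_image_sub_le_of_norm_hasDerivWithin_le
    (f := fun s => ψ s q₁ - ψ s q₂ - (q₁ - q₂) - s • (w q₁ - w q₂))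
    (f' := fun s => w (ψ s q₁) - w (ψ s q₂) - (w q₁ - w q₂))
    (C := CG) (s := Icc (0:ℝ) δ)
    (fun t ht => by
      have hder : HasDerivAt (fun s => ψ s q₁ - ψ s q₂ - (q₁ - q₂) - s • (w q₁ - w q₂))
          (w (ψ t q₁) - w (ψ t q₂) - (w q₁ - w q₂)) t := by
        have h4 : HasDerivAt (fun s : ℝ => s • (w q₁ - w q₂)) ((1:ℝ) • (w q₁ - w q₂)) t :=
          (hasDerivAt_id t).smul_const _
        have := (((hψflow q₁ t).sub (hψflow q₂ t)).sub_const (q₁ - q₂)).sub h4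
        rw [one_smul] at this
        exact this
      exact hder.hasDerivWithinAt)
    (fun t ht => by
      have ht' : t ∈ Icc (0:ℝ) δ₀ := ⟨ht.1, ht.2.trans hδIcc.2⟩
      have htδ₁ : t ≤ δ₁ := ht.2.trans hδδ₁
      have m₁ := flow_mem2 hψ0 hψflow p hC h₁ t ht'
      have m₂ := flow_mem2 hψ0 hψflow p hC h₂ t ht'
      have m₁' : q₁ ∈ closedBall p 2 := closedBall_subset_closedBall (by norm_num) h₁
      have m₂' : q₂ ∈ closedBall p 2 := closedBall_subset_closedBall (by norm_num) h₂
      show ‖w (ψ t q₁) - w (ψ t q₂) - (w q₁ - w q₂)‖ ≤ CG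
      -- decomposition
      set T₁ := w (ψ t q₁) - w (ψ t q₂) - (fderiv ℝ w (ψ t q₂)) (ψ t q₁ - ψ t q₂) with hT₁
      set T₂ := w q₁ - w q₂ - (fderiv ℝ w q₂) (q₁ - q₂) with hT₂
      set T₃ := (fderiv ℝ w (ψ t q₂)) (ψ t q₁ - ψ t q₂ - (q₁ - q₂)) with hT₃
      set T₄ := (fderiv ℝ w (ψ t q₂) - fderiv ℝ w q₂) (q₁ - q₂) with hT₄
      have hdec : w (ψ t q₁) - w (ψ t q₂) - (w q₁ - w q₂) = T₁ - T₂ + T₃ + T₄ := by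
        rw [hT₁, hT₂, hT₃, hT₄]
        simp only [map_sub, ContinuousLinearMap.sub_apply]
        abel
      rw [hdec]
      -- term bounds
      have hcon := flow_contract hw hψ0 hψflow p hC hM h₁ h₂ t ht'
      have hexpt : exp (M * t) ≤ exp M := by
        apply exp_le_exp.2
        calc M * t ≤ M * 1 := mul_le_mul_of_nonneg_left (ht'.2.trans (min_le_left _ _)) hM0
          _ = M := mul_one M
      have hψd : ‖ψ t q₁ - ψ t q₂‖ ≤ ‖q₁ - q₂‖ * exp M :=
        hcon.trans (mul_le_mul_of_nonneg_left hexpt (norm_nonneg _))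
      have hψdρ : ‖ψ t q₁ - ψ t q₂‖ ≤ ρ := by
        calc ‖ψ t q₁ - ψ t q₂‖ ≤ ‖q₁ - q₂‖ * exp M := hψd
          _ ≤ (ρ / exp M) * exp M := mul_le_mul_of_nonneg_right hd hexpM0.le
          _ = ρ := by field_simp
      have ht1 : ‖T₁‖ ≤ ε₁ * (‖q₁ - q₂‖ * exp M) :=
        (hT _ m₁ _ m₂ hψdρ).trans (mul_le_mul_of_nonneg_left hψd hε₁.le)
      have ht2 : ‖T₂‖ ≤ ε₁ * ‖q₁ - q₂‖ := hT _ m₁' _ m₂' hdρ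
      have hH := flow_H hw hψ0 hψflow p hC hM h₁ h₂ t ht'
      have ht3 : ‖T₃‖ ≤ M * (M * exp M * ‖q₁ - q₂‖ * δ₁) := by
        calc ‖T₃‖ ≤ ‖fderiv ℝ w (ψ t q₂)‖ * ‖ψ t q₁ - ψ t q₂ - (q₁ - q₂)‖ :=
              (fderiv ℝ w (ψ t q₂)).le_opNorm _
          _ ≤ M * (M * exp M * ‖q₁ - q₂‖ * δ₁) := by
              apply mul_le_mul (hM _ (hsub2 m₂)) _ (norm_nonneg _) hM0
              refine hH.trans ?_
              exact mul_le_mul_of_nonneg_left htδ₁ (by positivity)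
      have ht4 : ‖T₄‖ ≤ ε₁ * ‖q₁ - q₂‖ := by
        calc ‖T₄‖ ≤ ‖fderiv ℝ w (ψ t q₂) - fderiv ℝ w q₂‖ * ‖q₁ - q₂‖ :=
              (fderiv ℝ w (ψ t q₂) - fderiv ℝ w q₂).le_opNorm _
          _ ≤ ε₁ * ‖q₁ - q₂‖ := by
              apply mul_le_mul_of_nonneg_right _ (norm_nonneg _)
              apply hUC _ (hsub2 m₂) _ (hsub2 m₂')
              have hspeed := flow_speed hψ0 hψflow p hC h₂ t ht'
              refine hspeed.trans ?_
              have hδ₁ρ : δ₁ ≤ ρ/(C+1) := le_trans (min_le_right _ _) (min_le_left _ _)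
              calc (C+1) * t ≤ (C+1) * δ₁ := mul_le_mul_of_nonneg_left htδ₁ hC1.le
                _ ≤ (C+1) * (ρ/(C+1)) := mul_le_mul_of_nonneg_left hδ₁ρ hC1.le
                _ = ρ := by field_simp
      calc ‖T₁ - T₂ + T₃ + T₄‖ ≤ ‖T₁ - T₂ + T₃‖ + ‖T₄‖ := norm_add_le _ _
        _ ≤ ‖T₁ - T₂‖ + ‖T₃‖ + ‖T₄‖ := add_le_add_left (norm_add_le _ _) _
        _ ≤ ‖T₁‖ + ‖T₂‖ + ‖T₃‖ + ‖T₄‖ := by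
            have := norm_sub_le T₁ T₂; linarith
        _ ≤ ε₁ * (‖q₁ - q₂‖ * exp M) + ε₁ * ‖q₁ - q₂‖ + M * (M * exp M * ‖q₁ - q₂‖ * δ₁)
              + ε₁ * ‖q₁ - q₂‖ := by linarith
        _ = CG := by rw [hCGdef]; ring)
    (convex_Icc _ _) (left_mem_Icc.2 hδ.1) (right_mem_Icc.2 hδ.1)
  -- evaluate at the endpoints
  have hf0 : ψ (0:ℝ) q₁ - ψ 0 q₂ - (q₁ - q₂) - (0:ℝ) • (w q₁ - w q₂) = 0 := by
    simp [hψ0]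
  simp only [hf0, sub_zero] at key
  have hCGε : CG ≤ ε' * ‖q₁ - q₂‖ := by
    have hEpos : (0:ℝ) < exp M + 2 := by positivity
    have e1 : ε₁ * (exp M + 2) = ε' / 2 := by
      rw [hε₁def]; field_simp
    have e2 : M * (M * exp M) * δ₁ ≤ ε' / 2 := by
      have h1 : δ₁ ≤ ε' / (2 * (M * (M * exp M) + 1)) :=
        le_trans (min_le_right _ _) (min_le_right _ _)
      have hpos : (0:ℝ) < M * (M * exp M) + 1 := by positivity
      have h2 : M * (M * exp M) * δ₁ ≤ M * (M * exp M) * (ε' / (2 * (M * (M * exp M) + 1))) :=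
        mul_le_mul_of_nonneg_left h1 (by positivity)
      refine h2.trans ?_
      rw [mul_div_assoc', div_le_div_iff₀ (by positivity) (by norm_num)]
      nlinarith [hε'.le, mul_nonneg (mul_nonneg hM0 (mul_nonneg hM0 hexpM0.le)) hε'.le]
    rw [hCGdef]
    have := norm_nonneg (q₁ - q₂)
    nlinarith
  calc ‖ψ δ q₁ - ψ δ q₂ - (q₁ - q₂) - δ • (w q₁ - w q₂)‖ ≤ CG * ‖δ‖ := key
    _ = CG * δ := by rw [Real.norm_eq_abs, abs_of_nonneg hδ.1]
    _ ≤ (ε' * ‖q₁ - q₂‖) * δ := mul_le_mul_of_nonneg_right hCGε hδ.1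
    _ = ε' * (δ * ‖q₁ - q₂‖) := by ring

lemma fderiv_flow_right [ProperSpace E] (hw : ContDiff ℝ 1 w) (hψ0 : ∀ x, ψ 0 x = x)
    (hψflow : ∀ x t, HasDerivAt (fun s => ψ s x) (w (ψ t x)) t)
    (hψsmooth : ∀ ε : ℝ, ContDiff ℝ 1 (ψ ε)) (p a : E) :
    HasDerivWithinAt (fun δ => fderiv ℝ (ψ δ) p a) (fderiv ℝ w p a) (Ici 0) 0 := by
  have hψid : ψ 0 = id := funext hψ0
  have hf0 : fderiv ℝ (ψ 0) p a = a := by rw [hψid, fderiv_id]; rfl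
  rw [hasDerivWithinAt_iff_isLittleO, Asymptotics.isLittleO_iff]
  intro c hc
  set ε' : ℝ := c / (2 * (‖a‖ + 1)) with hε'def
  have hε' : 0 < ε' := by apply div_pos hc; positivity
  obtain ⟨δ₁, hδ₁, η, hη, hEST⟩ := flow_EST hw hψ0 hψflow p hε'
  have hmem : Icc (0:ℝ) δ₁ ∈ 𝓝[Ici 0] (0:ℝ) := by
    apply Icc_mem_nhdsGE_of_mem
    exact ⟨le_rfl, hδ₁⟩
  filter_upwards [hmem] with δ hδ
  rw [sub_zero, hf0]
  -- goal : ‖fderiv ℝ (ψ δ) p a - a - δ • fderiv ℝ w p a‖ ≤ c * ‖δ‖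
  set L : E := fderiv ℝ (ψ δ) p a - a - δ • fderiv ℝ w p a with hLdef
  set F : ℝ → E := fun h => ψ δ (p + h • a) - ψ δ p - h • a - δ • (w (p + h • a) - w p)
    with hFdef
  have hline : HasDerivAt (fun h : ℝ => p + h • a) a 0 := by
    simpa using ((hasDerivAt_id (0:ℝ)).smul_const a).const_add p
  have hp0 : p + (0:ℝ) • a = p := by simp
  have h1 : HasDerivAt (fun h : ℝ => ψ δ (p + h • a)) (fderiv ℝ (ψ δ) p a) 0 := by
    refine HasFDerivAt.comp_hasDerivAt (0:ℝ) ?_ hline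
    rw [hp0]
    exact ((hψsmooth δ).differentiable one_ne_zero p).hasFDerivAt
  have h2 : HasDerivAt (fun h : ℝ => w (p + h • a)) (fderiv ℝ w p a) 0 := by
    refine HasFDerivAt.comp_hasDerivAt (0:ℝ) ?_ hline
    rw [hp0]
    exact ((hw.differentiable one_ne_zero) p).hasFDerivAt
  have hsa : HasDerivAt (fun h : ℝ => h • a) a 0 := by
    simpa using (hasDerivAt_id (0:ℝ)).smul_const a
  have hF : HasDerivAt F L 0 := by
    have := (((h1.sub_const (ψ δ p)).sub hsa).sub ((h2.sub_const (w p)).const_smul δ))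
    rw [hFdef]
    convert this using 1
    funext h
    simp [Pi.sub_apply, Pi.smul_apply]
  have hF0 : F 0 = 0 := by simp [hFdef]
  have hQ : Tendsto (fun h : ℝ => h⁻¹ • F h) (𝓝[>] 0) (𝓝 L) := by
    have hs := hasDerivAt_iff_tendsto_slope.1 hF
    have : (slope F 0) = fun h : ℝ => h⁻¹ • F h := by
      funext h
      rw [slope_def_module]
      simp [hF0]
    rw [this] at hs
    exact hs.mono_left (nhdsWithin_mono _ fun x hx => ne_of_gt hx)
  set h₀ : ℝ := min (η / (‖a‖ + 1)) (1 / (‖a‖ + 1)) with hh₀def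
  have hh₀ : 0 < h₀ := by
    apply lt_min <;> positivity
  have hbound : ∀ᶠ h : ℝ in 𝓝[>] 0, ‖h⁻¹ • F h‖ ≤ ε' * (δ * ‖a‖) := by
    filter_upwards [Ioo_mem_nhdsGT_of_mem (Set.left_mem_Ico.2 hh₀)] with h hh
    have hhpos : 0 < h := hh.1
    have hna : ‖h • a‖ = h * ‖a‖ := by
      rw [norm_smul, Real.norm_eq_abs, abs_of_pos hhpos]
    have hna1 : ‖h • a‖ ≤ 1 := by
      rw [hna]
      calc h * ‖a‖ ≤ (1 / (‖a‖ + 1)) * ‖a‖ := by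
            apply mul_le_mul_of_nonneg_right (hh.2.le.trans (min_le_right _ _)) (norm_nonneg _)
        _ ≤ 1 := by rw [div_mul_eq_mul_div, div_le_one (by positivity)]; linarith
    have hnaη : ‖h • a‖ ≤ η := by
      rw [hna]
      calc h * ‖a‖ ≤ (η / (‖a‖ + 1)) * ‖a‖ := by
            apply mul_le_mul_of_nonneg_right (hh.2.le.trans (min_le_left _ _)) (norm_nonneg _)
        _ ≤ η := by
            rw [div_mul_eq_mul_div, div_le_iff₀ (by positivity)]
            nlinarith [norm_nonneg a, hη.le]
    have hq₁ : p + h • a ∈ closedBall p 1 := by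
      rw [mem_closedBall, dist_eq_norm]
      simpa using hna1
    have hq₂ : p ∈ closedBall p 1 := mem_closedBall_self one_pos.le
    have hdiff : (p + h • a) - p = h • a := by abel
    have hE := hEST δ hδ (p + h • a) hq₁ p hq₂ (by rw [hdiff]; exact hnaη)
    rw [hdiff, hna] at hE
    rw [norm_smul, Real.norm_eq_abs, abs_inv, abs_of_pos hhpos]
    rw [inv_mul_le_iff₀ hhpos]
    calc ‖F h‖ ≤ ε' * (δ * (h * ‖a‖)) := hE
      _ = h * (ε' * (δ * ‖a‖)) := by ring
  have hL : ‖L‖ ≤ ε' * (δ * ‖a‖) := le_of_tendsto hQ.norm hbound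
  refine hL.trans ?_
  rw [hε'def, Real.norm_eq_abs, abs_of_nonneg hδ.1]
  rw [div_mul_eq_mul_div, div_le_iff₀ (by positivity)]
  nlinarith [norm_nonneg a, hc.le, hδ.1, mul_nonneg hδ.1 (norm_nonneg a),
    mul_nonneg (mul_nonneg hc.le hδ.1) (norm_nonneg a)]

lemma fderiv_flow_hasDerivAt [ProperSpace E] (hw : ContDiff ℝ 1 w) (hψ0 : ∀ x, ψ 0 x = x)
    (hψflow : ∀ x t, HasDerivAt (fun s => ψ s x) (w (ψ t x)) t)
    (hψsmooth : ∀ ε : ℝ, ContDiff ℝ 1 (ψ ε)) (p a : E) :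
    HasDerivAt (fun δ => fderiv ℝ (ψ δ) p a) (fderiv ℝ w p a) 0 := by
  have h₁ := fderiv_flow_right hw hψ0 hψflow hψsmooth p a
  -- time-reversed flow
  have hw' : ContDiff ℝ 1 (fun x => -(w x)) := hw.neg
  have hψ0' : ∀ x, ψ (-(0:ℝ)) x = x := fun x => by rw [neg_zero]; exact hψ0 x
  have hψflow' : ∀ (x : E) (t : ℝ),
      HasDerivAt (fun s => ψ (-s) x) ((fun x => -(w x)) (ψ (-t) x)) t := by
    intro x t
    have := (hψflow x (-t)).scomp (x := t) (hasDerivAt_neg t)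
    rw [neg_smul, one_smul] at this
    exact this
  have h₂ := fderiv_flow_right (ψ := fun δ x => ψ (-δ) x) hw' hψ0' hψflow'
    (fun ε => hψsmooth (-ε)) p a
  have hneg : fderiv ℝ (fun x => -(w x)) p a = -(fderiv ℝ w p a) := by
    rw [fderiv_fun_neg]; simp
  rw [hneg] at h₂
  -- h₂ : HasDerivWithinAt (fun δ => fderiv ℝ (ψ (-δ)) p a) (-(fderiv ℝ w p a)) (Ici 0) 0
  have h₂' : HasDerivWithinAt (fun δ : ℝ => fderiv ℝ (ψ (-δ)) p a)
      (-(fderiv ℝ w p a)) (Ici 0) (-(0:ℝ)) := by rw [neg_zero]; exact h₂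
  have h₃ : HasDerivWithinAt (fun δ => fderiv ℝ (ψ δ) p a) (fderiv ℝ w p a) (Iic 0) 0 := by
    have hcomp := HasDerivWithinAt.scomp (x := (0:ℝ)) (s := Iic (0:ℝ)) (t' := Ici (0:ℝ))
      h₂' ((hasDerivAt_neg (0:ℝ)).hasDerivWithinAt)
      (fun x hx => mem_Ici.mpr (neg_nonneg.mpr (mem_Iic.mp hx)))
    have heq : ((fun δ : ℝ => fderiv ℝ (ψ (-δ)) p a) ∘ Neg.neg)
        = fun δ : ℝ => fderiv ℝ (ψ δ) p a := by
      funext δ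
      simp [Function.comp, neg_neg]
    rw [heq] at hcomp
    simpa using hcomp
  have h₄ := h₃.union h₁
  rw [Iic_union_Ici] at h₄
  exact hasDerivWithinAt_univ.mp h₄

lemma gronwall_zero {d F : ℝ → E} (hd : ∀ t, HasDerivAt d (F t) t) {K T : ℝ} (hT : 0 ≤ T)
    (hb : ∀ t ∈ Icc (0:ℝ) T, ‖F t‖ ≤ K * ‖d t‖) (h0 : d 0 = 0) : d T = 0 := by
  have key := norm_le_gronwallBound_of_norm_deriv_right_le (f := d) (f' := F)
    (δ := 0) (K := K) (ε := 0) (a := 0) (b := T)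
    (fun t _ => (hd t).continuousAt.continuousWithinAt)
    (fun t _ => (hd t).hasDerivWithinAt)
    (by simp [h0])
    (fun t ht => by simpa using hb t (Ico_subset_Icc_self ht))
  have h := key T (right_mem_Icc.2 hT)
  rw [gronwallBound_ε0] at h
  simp only [zero_mul] at h
  exact norm_le_zero_iff.1 h

lemma flow_pushforward [ProperSpace E] {v : E → E} (hv : ContDiff ℝ 1 v) (hw : ContDiff ℝ 1 w)
    (hbracket : ∀ x : E, fderiv ℝ w x (v x) - fderiv ℝ v x (w x) = 0)
    (hψ0 : ∀ x, ψ 0 x = x) (hψadd : ∀ s t x, ψ (s + t) x = ψ s (ψ t x))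
    (hψflow : ∀ x t, HasDerivAt (fun s => ψ s x) (w (ψ t x)) t)
    (hψsmooth : ∀ ε : ℝ, ContDiff ℝ 1 (ψ ε)) :
    ∀ (ε : ℝ) (y : E), fderiv ℝ (ψ ε) y (v y) = v (ψ ε y) := by
  have hdiff : ∀ s : ℝ, Differentiable ℝ (ψ s) := fun s => (hψsmooth s).differentiable one_ne_zero
  intro ε₀ y
  set c : ℝ → E := fun s => ψ s y with hcdef
  set u : ℝ → E := fun s => fderiv ℝ (ψ s) y (v y) with hudef
  set z : ℝ → E := fun s => v (c s) with hzdef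
  have hccont : Continuous c := continuous_iff_continuousAt.2 fun s => (hψflow y s).continuousAt
  -- derivative of u
  have hu : ∀ ε, HasDerivAt u (fderiv ℝ w (c ε) (u ε)) ε := by
    intro ε
    have hco : ∀ s, u s = fderiv ℝ (ψ (s - ε)) (c ε) (u ε) := by
      intro s
      have hps : ψ s = fun x => ψ (s - ε) (ψ ε x) := by
        funext x
        have hse : s - ε + ε = s := by ring
        rw [← hψadd, hse]
      show fderiv ℝ (ψ s) y (v y) = _
      rw [hps]
      have hcomp : fderiv ℝ ((ψ (s - ε)) ∘ (ψ ε)) y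
          = (fderiv ℝ (ψ (s - ε)) (ψ ε y)).comp (fderiv ℝ (ψ ε) y) :=
        fderiv_comp (x := y) ((hdiff _) _) ((hdiff _) _)
      have : (fun x => ψ (s - ε) (ψ ε x)) = (ψ (s - ε)) ∘ (ψ ε) := rfl
      rw [this, hcomp]
      rfl
    have h2 := fderiv_flow_hasDerivAt hw hψ0 hψflow hψsmooth (c ε) (u ε)
    have hh : HasDerivAt (fun s : ℝ => s - ε) 1 ε := (hasDerivAt_id ε).sub_const ε
    have h3 := h2.scomp_of_eq ε hh (by simp)
    have heq2 : ((fun δ : ℝ => fderiv ℝ (ψ δ) (c ε) (u ε)) ∘ fun s : ℝ => s - ε)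
        = fun s : ℝ => fderiv ℝ (ψ (s - ε)) (c ε) (u ε) := rfl
    rw [heq2, one_smul] at h3
    exact h3.congr_of_eventuallyEq (Filter.Eventually.of_forall hco)
  -- derivative of z
  have hz : ∀ ε, HasDerivAt z (fderiv ℝ w (c ε) (z ε)) ε := by
    intro ε
    have hcy : HasDerivAt c (w (c ε)) ε := hψflow y ε
    have hvd : HasFDerivAt v (fderiv ℝ v (c ε)) (c ε) :=
      ((hv.differentiable one_ne_zero) (c ε)).hasFDerivAt
    have := hvd.comp_hasDerivAt ε hcy
    have hbr : fderiv ℝ v (c ε) (w (c ε)) = fderiv ℝ w (c ε) (v (c ε)) :=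
      (sub_eq_zero.mp (hbracket (c ε))).symm
    rw [hbr] at this
    exact this
  -- difference
  set d : ℝ → E := fun s => u s - z s with hddef
  have hd : ∀ ε, HasDerivAt d (fderiv ℝ w (c ε) (d ε)) ε := by
    intro ε
    have := (hu ε).sub (hz ε)
    rw [← map_sub] at this
    exact this
  have hd0 : d 0 = 0 := by
    have hu0 : u 0 = v y := by
      show fderiv ℝ (ψ 0) y (v y) = v y
      have hψid : ψ 0 = id := funext hψ0
      rw [hψid, fderiv_id]
      rfl
    have hz0 : z 0 = v y := by
      show v (ψ 0 y) = v y
      rw [hψ0]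
    simp [hddef, hu0, hz0]
  have hAcont : Continuous fun t => fderiv ℝ w (c t) :=
    (hw.continuous_fderiv one_ne_zero).comp hccont
  have hgoal : d ε₀ = 0 := by
    rcases le_or_gt 0 ε₀ with hε₀ | hε₀
    · obtain ⟨K, hK⟩ := (isCompact_Icc (a := (0:ℝ)) (b := ε₀)).exists_bound_of_continuousOn
        (hAcont.continuousOn)
      refine gronwall_zero (K := K) hd hε₀ (fun t ht => ?_) hd0
      calc ‖fderiv ℝ w (c t) (d t)‖ ≤ ‖fderiv ℝ w (c t)‖ * ‖d t‖ :=
            (fderiv ℝ w (c t)).le_opNorm _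
        _ ≤ K * ‖d t‖ := mul_le_mul_of_nonneg_right (hK t ht) (norm_nonneg _)
    · -- reverse time
      obtain ⟨K, hK⟩ := (isCompact_Icc (a := (0:ℝ)) (b := -ε₀)).exists_bound_of_continuousOn
        ((hAcont.comp continuous_neg).continuousOn)
      have hd' : ∀ t : ℝ, HasDerivAt (fun s => d (-s)) (-(fderiv ℝ w (c (-t)) (d (-t)))) t := by
        intro t
        have := (hd (-t)).scomp (x := t) (hasDerivAt_neg t)
        rw [neg_smul, one_smul] at this
        exact this
      have := gronwall_zero (d := fun s => d (-s)) (F := fun t => -(fderiv ℝ w (c (-t)) (d (-t))))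
        (K := K) hd' (by linarith : (0:ℝ) ≤ -ε₀) ?_ (by simpa using hd0)
      · simpa using this
      · intro t ht
        rw [norm_neg]
        calc ‖fderiv ℝ w (c (-t)) (d (-t))‖ ≤ ‖fderiv ℝ w (c (-t))‖ * ‖d (-t)‖ :=
              (fderiv ℝ w (c (-t))).le_opNorm _
          _ ≤ K * ‖d (-t)‖ := mul_le_mul_of_nonneg_right (hK t ht) (norm_nonneg _)
  have := sub_eq_zero.mp hgoal
  exact this

/-- If `[v, w] = 0` then the flow of `w` is a symmetry group of
`ẋ = v(x)`: it maps solutions to solutions. -/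
theorem commuting_flow_is_symmetry
    {m : ℕ} (v w : (Fin m → ℝ) → (Fin m → ℝ))
    (hv : ContDiff ℝ 1 v) (hw : ContDiff ℝ 1 w)
    (hbracket : ∀ x : Fin m → ℝ, fderiv ℝ w x (v x) - fderiv ℝ v x (w x) = 0)
    (ψ : ℝ → (Fin m → ℝ) → (Fin m → ℝ))
    (hψ0 : ∀ x, ψ 0 x = x)
    (hψadd : ∀ s t x, ψ (s + t) x = ψ s (ψ t x))
    (hψflow : ∀ x t, HasDerivAt (fun s => ψ s x) (w (ψ t x)) t)
    (hψsmooth : ∀ ε : ℝ, ContDiff ℝ 1 (ψ ε)) :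
    ∀ (ε : ℝ) (γ : ℝ → (Fin m → ℝ)), (∀ t : ℝ, HasDerivAt γ (v (γ t)) t) →
      ∀ t : ℝ, HasDerivAt (fun s => ψ ε (γ s)) (v (ψ ε (γ t))) t := by
  intro ε γ hγ t
  have h := ((hψsmooth ε).differentiable one_ne_zero (γ t)).hasFDerivAt.comp_hasDerivAt t (hγ t)
  rw [flow_pushforward hv hw hbracket hψ0 hψadd hψflow hψsmooth ε (γ t)] at h
  exact h
end

section
/- Let A be a real m×m matrix, let x : I → ℝ^m be a differentiable solution of ẋ = A x on an interval I, fix an index j, and assume x_j(t) ≠ 0 for all t ∈ I. Then the normalized vector u(t) = x(t)/x_j(t) is differentiable on I and satisfies u'(t) = A u(t) − (A u(t))_j · u(t), an equation whose right-hand side depends only on u. Hence the projection onto the ratios x_i/x_j induces a well-defined dynamics on the real projective space. -/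
/-- For a solution of `ẋ = A x` with `x_j(t) ≠ 0` on `I`, the
normalized vector `u = x / x_j` satisfies `u' = A u − (A u)_j • u`; the projection
onto `x_i/x_j` induces a well-defined dynamics on projective space. -/
theorem projective_space_dynamics
    {m : ℕ} (A : Matrix (Fin m) (Fin m) ℝ) (I : Set ℝ) (x : ℝ → (Fin m → ℝ))
    (j : Fin m)
    (hx : ∀ t ∈ I, HasDerivAt x (A.mulVec (x t)) t)
    (hxj : ∀ t ∈ I, x t j ≠ 0) :
    ∀ t ∈ I, HasDerivAt (fun s => (x s j)⁻¹ • x s)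
      (A.mulVec ((x t j)⁻¹ • x t)
        - A.mulVec ((x t j)⁻¹ • x t) j • ((x t j)⁻¹ • x t)) t := by
  intro t ht
  have hxd := hx t ht
  have hj : HasDerivAt (fun s => x s j) (A.mulVec (x t) j) t := by
    have := ((ContinuousLinearMap.proj (R := ℝ) (φ := fun _ : Fin m => ℝ) j)).hasFDerivAt.comp t hxd.hasFDerivAt
    have h2 := this.hasDerivAt
    simp at h2
    exact h2
  have hinv : HasDerivAt (fun s => (x s j)⁻¹)
      (-(A.mulVec (x t) j) / (x t j) ^ 2) t := hj.inv (hxj t ht)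
  have h := hinv.smul hxd
  convert h using 1
  · rfl
  · rfl
  · rfl
  · rfl
  have hne := hxj t ht
  rw [Matrix.mulVec_smul]
  funext i
  simp only [Pi.sub_apply, Pi.smul_apply, Pi.add_apply, smul_eq_mul]
  field_simp
  ring
end
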